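/- The band-restricted DP dominates the true edit distance: for all 0 ≤ i ≤ n and 0 ≤ j ≤ m, D_t(i,j) ≥ d(A.take i, B.take j) (as elements of ℕ∞, coercing the edit distance). -/

import Mathlib

/-- Costs for the Levenshtein distance (removed from Mathlib; restored with its old meaning). -/
structure Levenshtein.Cost (α β δ : Type*) where
  delete : α → δ
  insert : β → δ
  substitute : α → β → δ

/-- The default unit costs, as in the old Mathlib. -/
def Levenshtein.defaultCost {α : Type*} [DecidableEq α] : Levenshtein.Cost α α ℕ where
  delete _ := 1
  insert _ := 1
  substitute a b := if a = b then 0 else 1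

/-- The Levenshtein distance, by the recurrence the old Mathlib definition satisfied. -/
def levenshtein {α β δ : Type*} [AddZeroClass δ] [Min δ] (C : Levenshtein.Cost α β δ) :
    List α → List β → δ
  | [], [] => 0
  | x :: xs, [] => C.delete x + levenshtein C xs []
  | [], y :: ys => C.insert y + levenshtein C [] ys
  | x :: xs, y :: ys =>
      min (C.delete x + levenshtein C xs (y :: ys))
        (min (C.insert y + levenshtein C (x :: xs) ys) (C.substitute x y + levenshtein C xs ys))

/-- The unit-cost Levenshtein edit distance. -/
def editDist {α : Type*} [DecidableEq α] (A B : List α) : ℕ :=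
  levenshtein Levenshtein.defaultCost A B

/-- The band-restricted DP table `D_t` with values in `ℕ∞`: entries outside the diagonal band
`|i - j| ≤ t` are `⊤`, `D_t(0,0) = 0`, and otherwise `D_t(i,j)` is the minimum of the
applicable terms (diagonal with substitution cost, vertical `+1`, horizontal `+1`). -/
noncomputable def bandDP {α : Type*} [DecidableEq α] (A B : List α) (t : ℕ) : ℕ → ℕ → ℕ∞
  | i, j =>
    if (t : ℤ) < |(i : ℤ) - (j : ℤ)| then ⊤
    else
      match i, j with
      | 0, 0 => 0
      | i + 1, 0 => bandDP A B t i 0 + 1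
      | 0, j + 1 => bandDP A B t 0 j + 1
      | i + 1, j + 1 =>
          min (bandDP A B t i j + (if A[i]? = B[j]? then (0 : ℕ∞) else 1))
            (min (bandDP A B t i (j + 1) + 1) (bandDP A B t (i + 1) j + 1))
  termination_by i j => i + j

section Helpers

open Levenshtein

variable {α : Type*} [DecidableEq α]

theorem levenshtein_nil_nil {α' β δ : Type*} [AddZeroClass δ] [Min δ] (C : Cost α' β δ) :
    levenshtein C [] [] = 0 := by rw [levenshtein]

theorem levenshtein_cons_nil {α' β δ : Type*} [AddZeroClass δ] [Min δ] (C : Cost α' β δ)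
    (x : α') (xs : List α') : levenshtein C (x :: xs) [] = C.delete x + levenshtein C xs [] := by
  rw [levenshtein]

theorem levenshtein_nil_cons {α' β δ : Type*} [AddZeroClass δ] [Min δ] (C : Cost α' β δ)
    (y : β) (ys : List β) : levenshtein C [] (y :: ys) = C.insert y + levenshtein C [] ys := by
  rw [levenshtein]

theorem levenshtein_cons_cons {α' β δ : Type*} [AddZeroClass δ] [Min δ] (C : Cost α' β δ)
    (x : α') (xs : List α') (y : β) (ys : List β) :
    levenshtein C (x :: xs) (y :: ys) =
      min (C.delete x + levenshtein C xs (y :: ys))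
        (min (C.insert y + levenshtein C (x :: xs) ys) (C.substitute x y + levenshtein C xs ys)) := by
  rw [levenshtein]

@[simp] theorem Levenshtein.defaultCost_delete (a : α) : (defaultCost : Cost α α ℕ).delete a = 1 := rfl

@[simp] theorem Levenshtein.defaultCost_insert (a : α) : (defaultCost : Cost α α ℕ).insert a = 1 := rfl

@[simp] theorem Levenshtein.defaultCost_substitute (a b : α) :
    (defaultCost : Cost α α ℕ).substitute a b = if a = b then 0 else 1 := rfl

private lemma min3_mono {a b c a' b' c' : ℕ} (h1 : a ≤ a') (h2 : b ≤ b') (h3 : c ≤ c') :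
    min a (min b c) ≤ min a' (min b' c') :=
  min_le_min h1 (min_le_min h2 h3)

lemma lev_nil_right (X : List α) : levenshtein defaultCost X [] = X.length := by
  induction X with
  | nil => simp [levenshtein_nil_nil]
  | cons x X ih => simp [levenshtein_cons_nil, ih]; omega

lemma lev_nil_left (Y : List α) : levenshtein defaultCost [] Y = Y.length := by
  induction Y with
  | nil => simp [levenshtein_nil_nil]
  | cons y Y ih => simp [levenshtein_nil_cons, ih]; omega

lemma lev_snoc_left (X Y : List α) (a : α) :
    levenshtein defaultCost (X ++ [a]) Y ≤ levenshtein defaultCost X Y + 1 := by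
  induction X generalizing Y with
  | nil =>
    induction Y with
    | nil => simp [lev_nil_right]
    | cons y Y ihY =>
      rw [List.nil_append] at *
      rw [levenshtein_cons_cons]
      refine le_trans (le_trans (min_le_right _ _) (min_le_left _ _)) ?_
      simp only [defaultCost_insert, levenshtein_nil_cons, defaultCost_insert, lev_nil_left] at *
      omega
  | cons x X ihX =>
    induction Y with
    | nil =>
      simp only [lev_nil_right, List.length_append, List.length_cons, List.length_nil]
      omega
    | cons y Y ihY =>
      rw [List.cons_append, levenshtein_cons_cons, levenshtein_cons_cons,
        ← min_add_add_right, ← min_add_add_right]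
      refine min3_mono ?_ ?_ ?_
      · simpa [add_assoc] using Nat.add_le_add_left (ihX (y :: Y)) (defaultCost.delete x)
      · simpa [add_assoc] using Nat.add_le_add_left ihY (defaultCost.insert y)
      · simpa [add_assoc] using Nat.add_le_add_left (ihX Y) (defaultCost.substitute x y)

lemma lev_snoc_right (X Y : List α) (b : α) :
    levenshtein defaultCost X (Y ++ [b]) ≤ levenshtein defaultCost X Y + 1 := by
  induction X generalizing Y with
  | nil => simp [lev_nil_left]
  | cons x X ihX =>
    induction Y with
    | nil =>
      rw [List.nil_append, levenshtein_cons_cons]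
      refine le_trans (min_le_left _ _) ?_
      have := ihX []
      simp only [List.nil_append, defaultCost_delete, lev_nil_right, List.length_cons] at *
      omega
    | cons y Y ihY =>
      rw [List.cons_append, levenshtein_cons_cons, levenshtein_cons_cons,
        ← min_add_add_right, ← min_add_add_right]
      refine min3_mono ?_ ?_ ?_
      · simpa [add_assoc] using Nat.add_le_add_left (ihX (y :: Y)) (defaultCost.delete x)
      · simpa [add_assoc] using Nat.add_le_add_left ihY (defaultCost.insert y)
      · simpa [add_assoc] using Nat.add_le_add_left (ihX Y) (defaultCost.substitute x y)

lemma lev_snoc_both (X Y : List α) (a b : α) :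
    levenshtein defaultCost (X ++ [a]) (Y ++ [b]) ≤
      levenshtein defaultCost X Y + (if a = b then 0 else 1) := by
  induction X generalizing Y with
  | nil =>
    induction Y with
    | nil =>
      rw [List.nil_append, List.nil_append, levenshtein_cons_cons]
      refine le_trans (le_trans (min_le_right _ _) (min_le_right _ _)) ?_
      simp [levenshtein_nil_nil]
    | cons y Y ihY =>
      rw [List.nil_append, List.cons_append, levenshtein_cons_cons]
      refine le_trans (le_trans (min_le_right _ _) (min_le_left _ _)) ?_
      rw [List.nil_append] at ihY
      simp only [defaultCost_insert, lev_nil_left] at *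
      have : (1 : ℕ) + levenshtein defaultCost [a] (Y ++ [b]) ≤
          1 + (Y.length + if a = b then 0 else 1) := by
        exact Nat.add_le_add_left ihY 1
      refine le_trans this ?_
      simp only [List.length_cons]
      split_ifs <;> omega
  | cons x X ihX =>
    induction Y with
    | nil =>
      rw [List.cons_append, List.nil_append, levenshtein_cons_cons]
      refine le_trans (min_le_left _ _) ?_
      have h := ihX []
      rw [List.nil_append] at h
      simp only [defaultCost_delete, lev_nil_right]
      refine le_trans (Nat.add_le_add_left h 1) ?_
      rw [lev_nil_right]
      simp only [List.length_cons]
      split_ifs <;> omega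
    | cons y Y ihY =>
      rw [List.cons_append, List.cons_append, levenshtein_cons_cons, levenshtein_cons_cons,
        ← min_add_add_right, ← min_add_add_right]
      refine min3_mono ?_ ?_ ?_
      · simpa [add_assoc] using Nat.add_le_add_left (ihX (y :: Y)) (defaultCost.delete x)
      · simpa [add_assoc] using Nat.add_le_add_left ihY (defaultCost.insert y)
      · simpa [add_assoc] using Nat.add_le_add_left (ihX Y) (defaultCost.substitute x y)

open Levenshtein in

omit [DecidableEq α] in
lemma take_succ_eq (A : List α) (i : ℕ) (hi : i < A.length) :
    A.take (i + 1) = A.take i ++ [A[i]] := by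
  rw [List.take_succ, List.getElem?_eq_getElem hi]
  rfl

theorem aux (A B : List α) (t : ℕ) :
    ∀ i j, i ≤ A.length → j ≤ B.length →
      ((levenshtein defaultCost (A.take i) (B.take j) : ℕ) : ℕ∞) ≤ bandDP A B t i j
  | 0, 0, hi, hj => by
    rw [bandDP]
    split
    · exact le_top
    · simp [levenshtein_nil_nil]
  | i + 1, 0, hi, hj => by
    rw [bandDP]
    split
    · exact le_top
    · have h := aux A B t i 0 (by omega) hj
      simp only [List.take_zero] at h ⊢
      calc ((levenshtein defaultCost (A.take (i + 1)) ([] : List α) : ℕ) : ℕ∞)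
          = ((levenshtein defaultCost (A.take i) ([] : List α) + 1 : ℕ) : ℕ∞) := by
            rw [lev_nil_right, lev_nil_right, List.length_take, List.length_take]
            congr 1
            omega
        _ = ((levenshtein defaultCost (A.take i) ([] : List α) : ℕ) : ℕ∞) + 1 := by
            push_cast; ring
        _ ≤ bandDP A B t i 0 + 1 := add_le_add_left h 1
  | 0, j + 1, hi, hj => by
    rw [bandDP]
    split
    · exact le_top
    · have h := aux A B t 0 j hi (by omega)
      simp only [List.take_zero] at h ⊢
      calc ((levenshtein defaultCost ([] : List α) (B.take (j + 1)) : ℕ) : ℕ∞)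
          = ((levenshtein defaultCost ([] : List α) (B.take j) + 1 : ℕ) : ℕ∞) := by
            rw [lev_nil_left, lev_nil_left, List.length_take, List.length_take]
            congr 1
            omega
        _ = ((levenshtein defaultCost ([] : List α) (B.take j) : ℕ) : ℕ∞) + 1 := by
            push_cast; ring
        _ ≤ bandDP A B t 0 j + 1 := add_le_add_left h 1
  | i + 1, j + 1, hi, hj => by
    rw [bandDP]
    split
    · exact le_top
    · have hiA : i < A.length := by omega
      have hjB : j < B.length := by omega
      have hA : A.take (i + 1) = A.take i ++ [A[i]] := take_succ_eq A i hiA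
      have hB : B.take (j + 1) = B.take j ++ [B[j]] := take_succ_eq B j hjB
      refine le_min ?_ (le_min ?_ ?_)
      · -- diagonal
        have h := aux A B t i j (by omega) (by omega)
        have key := lev_snoc_both (A.take i) (B.take j) A[i] B[j]
        rw [← hA, ← hB] at key
        have hcost : (if A[i]? = B[j]? then (0 : ℕ∞) else 1)
            = ((if A[i] = B[j] then 0 else 1 : ℕ) : ℕ∞) := by
          rw [List.getElem?_eq_getElem hiA, List.getElem?_eq_getElem hjB]
          simp only [Option.some.injEq]
          split_ifs <;> simp
        rw [hcost]
        calc ((levenshtein defaultCost (A.take (i+1)) (B.take (j+1)) : ℕ) : ℕ∞)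
            ≤ ((levenshtein defaultCost (A.take i) (B.take j)
                + (if A[i] = B[j] then 0 else 1) : ℕ) : ℕ∞) := by exact_mod_cast key
          _ = ((levenshtein defaultCost (A.take i) (B.take j) : ℕ) : ℕ∞)
                + ((if A[i] = B[j] then 0 else 1 : ℕ) : ℕ∞) := by push_cast; ring
          _ ≤ bandDP A B t i j + ((if A[i] = B[j] then 0 else 1 : ℕ) : ℕ∞) :=
              add_le_add_left h _
      · -- vertical
        have h := aux A B t i (j + 1) (by omega) hj
        have key := lev_snoc_left (A.take i) (B.take (j + 1)) A[i]
        rw [← hA] at key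
        calc ((levenshtein defaultCost (A.take (i+1)) (B.take (j+1)) : ℕ) : ℕ∞)
            ≤ ((levenshtein defaultCost (A.take i) (B.take (j+1)) + 1 : ℕ) : ℕ∞) := by
              exact_mod_cast key
          _ = ((levenshtein defaultCost (A.take i) (B.take (j+1)) : ℕ) : ℕ∞) + 1 := by
              push_cast; ring
          _ ≤ bandDP A B t i (j + 1) + 1 := add_le_add_left h 1
      · -- horizontal
        have h := aux A B t (i + 1) j hi (by omega)
        have key := lev_snoc_right (A.take (i + 1)) (B.take j) B[j]
        rw [← hB] at key
        calc ((levenshtein defaultCost (A.take (i+1)) (B.take (j+1)) : ℕ) : ℕ∞)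
            ≤ ((levenshtein defaultCost (A.take (i+1)) (B.take j) + 1 : ℕ) : ℕ∞) := by
              exact_mod_cast key
          _ = ((levenshtein defaultCost (A.take (i+1)) (B.take j) : ℕ) : ℕ∞) + 1 := by
              push_cast; ring
          _ ≤ bandDP A B t (i + 1) j + 1 := add_le_add_left h 1
  termination_by i j => i + j

end Helpers

/-- The band-restricted DP dominates the true edit distance. -/
theorem bandDP_ge_editDist {α : Type*} [DecidableEq α] (A B : List α) (t : ℕ)
    (i j : ℕ) (hi : i ≤ A.length) (hj : j ≤ B.length) :
    (editDist (A.take i) (B.take j) : ℕ∞) ≤ bandDP A B t i j :=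
  aux A B t i j hi hj
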